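/- arXiv:2403.14134 — 3 statements merged into one kernel-verified Lean document; each statement's English description precedes it below -/
import Mathlib

section
/- Let Γ be a Brauer configuration and V a polygon satisfying condition (E): for every e ∈ V, the polygon [σ^{-1}(e)] is either a 2-gon (edge) or equals V. Define σ' : H → H by: σ'(e) = σ(e) for e ∈ H₁(V) ∪ H₂(V); σ'(e) = \overline{p_V(e)} for e ∈ H₃(V); σ'(f) = x_f for f ∈ H₄(V); σ'(f) = n_V(f) for f ∈ H₅(V). Then σ' is a bijection of H. -/
open Finset

noncomputable section
open scoped Classical

variable {H : Type*} [Fintype H]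

/-- The setoid on angles whose classes are the `σ`-orbits (the *vertices*). -/
def orbitSetoid (σ : Equiv.Perm H) : Setoid H :=
  ⟨σ.SameCycle, ⟨fun x => Equiv.Perm.SameCycle.refl σ x,
    fun h => h.symm, fun h1 h2 => h1.trans h2⟩⟩

/-- Vertices of a Brauer configuration: `σ`-orbits of angles. -/
abbrev Vertex (σ : Equiv.Perm H) := Quotient (orbitSetoid σ)

/-- Polygons of a Brauer configuration: `ψ`-equivalence classes of angles. -/
abbrev BrauerPolygon (ψ : Setoid H) := Quotient ψ

/-- The canonical surjection `s : H → H/⟨σ⟩`. -/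
def vtx (σ : Equiv.Perm H) (h : H) : Vertex σ := Quotient.mk _ h

/-- The canonical surjection `H → H/ψ`. -/
def pgn (ψ : Setoid H) (h : H) : BrauerPolygon ψ := Quotient.mk _ h

/-- Valency of a vertex: the cardinality of `s⁻¹(u)`. -/
def valency (σ : Equiv.Perm H) (u : Vertex σ) : ℕ :=
  (univ.filter fun h => vtx σ h = u).card

/-- `occ(u, V)` : the number of angles of the polygon `V` lying on the vertex `u`. -/
def occ (σ : Equiv.Perm H) (ψ : Setoid H) (u : Vertex σ) (V : BrauerPolygon ψ) : ℕ :=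
  (univ.filter fun h => vtx σ h = u ∧ pgn ψ h = V).card

/-- Number of angles of a polygon (`#V`). -/
def polyCard (ψ : Setoid H) (V : BrauerPolygon ψ) : ℕ :=
  (univ.filter fun h => pgn ψ h = V).card

/-- The data `(H, σ, ψ, s, 𝔪)` is a Brauer configuration: `H` is nonempty,
every `ψ`-class has at least two elements, and the multiplicity is positive. -/
def IsBrauerConfig (σ : Equiv.Perm H) (ψ : Setoid H) (m : Vertex σ → ℕ) : Prop :=
  Nonempty H ∧ (∀ h : H, ∃ h', h' ≠ h ∧ ψ.r h h') ∧ (∀ v, 0 < m v)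

/-- The angle `h` belongs to the polygon `V`. -/
def inPoly (ψ : Setoid H) (V : BrauerPolygon ψ) (h : H) : Prop := pgn ψ h = V

/-- `H₁(V) = {e ∈ V : s⁻¹(s(e)) ⊆ V}`. -/
def H1 (σ : Equiv.Perm H) (ψ : Setoid H) (V : BrauerPolygon ψ) : Set H :=
  {e | inPoly ψ V e ∧ ∀ h, σ.SameCycle e h → inPoly ψ V h}

/-- `H₂(V) = {e ∈ V : s⁻¹(s(e)) ⊄ V, σ(e) ∈ V}`. -/
def H2 (σ : Equiv.Perm H) (ψ : Setoid H) (V : BrauerPolygon ψ) : Set H :=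
  {e | inPoly ψ V e ∧ ¬ (∀ h, σ.SameCycle e h → inPoly ψ V h) ∧ inPoly ψ V (σ e)}

/-- `H₃(V) = {e ∈ V : s⁻¹(s(e)) ⊄ V, σ(e) ∉ V}`. -/
def H3 (σ : Equiv.Perm H) (ψ : Setoid H) (V : BrauerPolygon ψ) : Set H :=
  {e | inPoly ψ V e ∧ ¬ (∀ h, σ.SameCycle e h → inPoly ψ V h) ∧ ¬ inPoly ψ V (σ e)}

/-- `c = min {i ≥ 1 : σ^{-i}(f) ∉ V}`. -/
def pSteps (σ : Equiv.Perm H) (ψ : Setoid H) (V : BrauerPolygon ψ) (f : H) : ℕ :=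
  sInf {i : ℕ | 1 ≤ i ∧ ¬ inPoly ψ V ((σ.symm ^ i) f)}

/-- `p_V(f) = σ^{-c}(f)`. -/
def pV (σ : Equiv.Perm H) (ψ : Setoid H) (V : BrauerPolygon ψ) (f : H) : H :=
  (σ.symm ^ pSteps σ ψ V f) f

/-- `d = min {j ≥ 1 : σ^{j}(f) ∉ V}`. -/
def nSteps (σ : Equiv.Perm H) (ψ : Setoid H) (V : BrauerPolygon ψ) (f : H) : ℕ :=
  sInf {j : ℕ | 1 ≤ j ∧ ¬ inPoly ψ V ((σ ^ j) f)}

/-- `n_V(f) = σ^{d}(f)`. -/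
def nV (σ : Equiv.Perm H) (ψ : Setoid H) (V : BrauerPolygon ψ) (f : H) : H :=
  (σ ^ nSteps σ ψ V f) f

/-- The polygon of `h` is a `2`-gon (an *edge*). -/
def isEdge (ψ : Setoid H) (h : H) : Prop :=
  (univ.filter fun x => ψ.r h x).card = 2

/-- For an angle of an edge `{h, h'}`, `bar h = h'`; junk value otherwise. -/
def bar (ψ : Setoid H) (h : H) : H :=
  if hx : ∃ x, x ≠ h ∧ ψ.r h x ∧ ∀ y, y ≠ h → ψ.r h y → y = x then hx.choose else h

/-- Condition (E): every predecessor of `V` around each vertex is an edge or `V` itself. -/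
def condE (σ : Equiv.Perm H) (ψ : Setoid H) (V : BrauerPolygon ψ) : Prop :=
  ∀ e : H, inPoly ψ V e → isEdge ψ (σ.symm e) ∨ pgn ψ (σ.symm e) = V

/-- `H₄(V) = {f ∈ H∖V : ∃ e ∈ V, σ⁻¹(e) ∉ V, n_V(f) = bar(σ⁻¹(e))}`. -/
def H4 (σ : Equiv.Perm H) (ψ : Setoid H) (V : BrauerPolygon ψ) : Set H :=
  {f | ¬ inPoly ψ V f ∧ ∃ e, inPoly ψ V e ∧ ¬ inPoly ψ V (σ.symm e) ∧
    nV σ ψ V f = bar ψ (σ.symm e)}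

/-- `H₅(V) = {f ∈ H∖V : ∀ e ∈ V with σ⁻¹(e) ∉ V, n_V(f) ≠ bar(σ⁻¹(e))}`. -/
def H5 (σ : Equiv.Perm H) (ψ : Setoid H) (V : BrauerPolygon ψ) : Set H :=
  {f | ¬ inPoly ψ V f ∧ ∀ e, inPoly ψ V e → ¬ inPoly ψ V (σ.symm e) →
    nV σ ψ V f ≠ bar ψ (σ.symm e)}

/-- For `f ∈ H₄(V)`, the unique `e ∈ V` with `n_V(f) = bar(σ⁻¹(e))`; junk otherwise. -/
def xF (σ : Equiv.Perm H) (ψ : Setoid H) (V : BrauerPolygon ψ) (f : H) : H :=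
  if hx : ∃ e, inPoly ψ V e ∧ ¬ inPoly ψ V (σ.symm e) ∧ nV σ ψ V f = bar ψ (σ.symm e)
  then hx.choose else f

/-- The underlying map `σ'` of the left flip at `V` (Table 1). -/
def flipFun (σ : Equiv.Perm H) (ψ : Setoid H) (V : BrauerPolygon ψ) (h : H) : H :=
  if h ∈ H1 σ ψ V ∨ h ∈ H2 σ ψ V then σ h
  else if h ∈ H3 σ ψ V then bar ψ (pV σ ψ V h)
  else if h ∈ H4 σ ψ V then xF σ ψ V h
  else nV σ ψ V h

/-- The orbit setoid of the flipped map `σ'` (vertices of the flipped configuration). -/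
def flipOrbitSetoid (σ : Equiv.Perm H) (ψ : Setoid H) (V : BrauerPolygon ψ) : Setoid H :=
  Relation.EqvGen.setoid (fun a b => flipFun σ ψ V a = b)

/-- The canonical surjection `s'` of the flipped configuration. -/
def vtx' (σ : Equiv.Perm H) (ψ : Setoid H) (V : BrauerPolygon ψ) (h : H) :
    Quotient (flipOrbitSetoid σ ψ V) := Quotient.mk _ h

/-- The vertex of `Γ` corresponding (via the table defining the flip) to the
`σ'`-orbit of an angle `h`. -/
def gammaFun (σ : Equiv.Perm H) (ψ : Setoid H) (V : BrauerPolygon ψ) (h : H) : Vertex σ :=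
  if h ∈ H2 σ ψ V ∨ h ∈ H3 σ ψ V then vtx σ (bar ψ (pV σ ψ V h)) else vtx σ h

/-- `occ'(v, V) = #{e ∈ H₂(V) ⊔ H₃(V) : s(bar(p_V(e))) = v}`. -/
def occ' (σ : Equiv.Perm H) (ψ : Setoid H) (V : BrauerPolygon ψ) (v : Vertex σ) : ℕ :=
  (univ.filter fun e => (e ∈ H2 σ ψ V ∨ e ∈ H3 σ ψ V) ∧
    vtx σ (bar ψ (pV σ ψ V e)) = v).card

/-- `χ(U)` : the multiplicity of `P_U` in `T_V⁰`, i.e. the number of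
`e ∈ H₂(V) ⊔ H₃(V)` with `[p_V(e)] = U`. -/
def chi (σ : Equiv.Perm H) (ψ : Setoid H) (V U : BrauerPolygon ψ) : ℕ :=
  (univ.filter fun e => (e ∈ H2 σ ψ V ∨ e ∈ H3 σ ψ V) ∧
    pgn ψ (pV σ ψ V e) = U).card

section FlipAux
set_option linter.unusedSectionVars false

variable (σ : Equiv.Perm H) (ψ : Setoid H) (V : BrauerPolygon ψ)

private lemma pgn_eq_of_rel {a b : H} (h : ψ.r a b) : pgn ψ a = pgn ψ b :=
  Quotient.sound h

private lemma inPoly_congr {a b : H} (h : ψ.r a b) :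
    inPoly ψ V a ↔ inPoly ψ V b := by
  unfold inPoly
  rw [pgn_eq_of_rel ψ h]

/-- Specification of `bar` on an edge. -/
private lemma bar_spec {h : H} (he : isEdge ψ h) :
    ψ.r h (bar ψ h) ∧ bar ψ h ≠ h ∧ ∀ y, y ≠ h → ψ.r h y → y = bar ψ h := by
  have hh : h ∈ univ.filter fun x => ψ.r h x := by
    simp only [Finset.mem_filter, Finset.mem_univ, true_and]
    exact ψ.refl h
  obtain ⟨a, b, hab, hset⟩ := Finset.card_eq_two.mp he
  rw [hset] at hh
  simp only [Finset.mem_insert, Finset.mem_singleton] at hh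
  have hx : ∃ x, x ≠ h ∧ ψ.r h x ∧ ∀ y, y ≠ h → ψ.r h y → y = x := by
    have hmem : ∀ y, ψ.r h y → (y = a ∨ y = b) := by
      intro y hy
      have : y ∈ univ.filter fun x => ψ.r h x := by simp [hy]
      rw [hset] at this
      simpa using this
    have hra : ψ.r h a := by
      have : a ∈ univ.filter fun x => ψ.r h x := by rw [hset]; simp
      simpa using this
    have hrb : ψ.r h b := by
      have : b ∈ univ.filter fun x => ψ.r h x := by rw [hset]; simp
      simpa using this
    rcases hh with rfl | rfl
    · refine ⟨b, fun hc => hab hc.symm, hrb, ?_⟩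
      intro y hy hry
      rcases hmem y hry with rfl | rfl
      · exact absurd rfl hy
      · rfl
    · refine ⟨a, fun hc => hab hc, hra, ?_⟩
      intro y hy hry
      rcases hmem y hry with rfl | rfl
      · rfl
      · exact absurd rfl hy
  have hx' : ∃ x, x ≠ h ∧ ψ.r h x ∧ ∀ y, y ≠ h → ψ.r h y → y = x := hx
  rw [bar, dif_pos hx']
  obtain ⟨hne, hr, huniq⟩ := hx'.choose_spec
  exact ⟨hr, hne, huniq⟩

private lemma isEdge_congr {a b : H} (hr : ψ.r a b) : isEdge ψ a ↔ isEdge ψ b := by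
  unfold isEdge
  have : (univ.filter fun x => ψ.r a x) = univ.filter fun x => ψ.r b x := by
    ext x
    simp only [Finset.mem_filter, Finset.mem_univ, true_and]
    exact ⟨fun h => Setoid.trans (Setoid.symm hr) h, fun h => Setoid.trans hr h⟩
  rw [this]

private lemma bar_bar {h : H} (he : isEdge ψ h) : bar ψ (bar ψ h) = h := by
  obtain ⟨hr, hne, _⟩ := bar_spec ψ he
  have he' : isEdge ψ (bar ψ h) := (isEdge_congr ψ hr).mp he
  obtain ⟨_, _, huniq'⟩ := bar_spec ψ he'
  exact (huniq' h hne.symm (Setoid.symm hr)).symm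

/-- Specification of `nSteps` when the defining set is nonempty. -/
private lemma nSteps_spec {f : H}
    (hne : {j : ℕ | 1 ≤ j ∧ ¬ inPoly ψ V ((σ ^ j) f)}.Nonempty) :
    (1 ≤ nSteps σ ψ V f ∧ ¬ inPoly ψ V ((σ ^ nSteps σ ψ V f) f)) ∧
      ∀ j, 1 ≤ j → j < nSteps σ ψ V f → inPoly ψ V ((σ ^ j) f) := by
  refine ⟨Nat.sInf_mem hne, ?_⟩
  intro j h1 hj
  by_contra hc
  exact absurd (Nat.sInf_le (Set.mem_setOf_eq ▸ ⟨h1, hc⟩)) (not_le.mpr hj)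

private lemma pSteps_spec {f : H}
    (hne : {i : ℕ | 1 ≤ i ∧ ¬ inPoly ψ V ((σ.symm ^ i) f)}.Nonempty) :
    (1 ≤ pSteps σ ψ V f ∧ ¬ inPoly ψ V ((σ.symm ^ pSteps σ ψ V f) f)) ∧
      ∀ i, 1 ≤ i → i < pSteps σ ψ V f → inPoly ψ V ((σ.symm ^ i) f) := by
  refine ⟨Nat.sInf_mem hne, ?_⟩
  intro i h1 hi
  by_contra hc
  exact absurd (Nat.sInf_le (Set.mem_setOf_eq ▸ ⟨h1, hc⟩)) (not_le.mpr hi)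

private lemma nSteps_nonempty {f : H} (hf : ¬ inPoly ψ V f) :
    {j : ℕ | 1 ≤ j ∧ ¬ inPoly ψ V ((σ ^ j) f)}.Nonempty := by
  refine ⟨orderOf σ, orderOf_pos σ, ?_⟩
  rw [pow_orderOf_eq_one]
  simpa using hf

private lemma pow_symm_apply {i d : ℕ} (hid : i ≤ d) (f : H) :
    (σ.symm ^ i) ((σ ^ d) f) = (σ ^ (d - i)) f := by
  have h1 : (σ ^ d) f = (σ ^ i) ((σ ^ (d - i)) f) := by
    rw [← Equiv.Perm.mul_apply, ← pow_add]
    congr 2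
    omega
  have h2 : (σ.symm) ^ i = (σ ^ i)⁻¹ := by
    rw [← inv_pow]; rfl
  rw [h1, h2, ← Equiv.Perm.mul_apply, inv_mul_cancel, Equiv.Perm.one_apply]

private lemma pow_apply_symm {j c : ℕ} (hjc : j ≤ c) (e : H) :
    (σ ^ j) ((σ.symm ^ c) e) = (σ.symm ^ (c - j)) e := by
  have := pow_symm_apply σ.symm hjc e
  simpa using this

private lemma pow_apply_symm' {j c : ℕ} (hcj : c ≤ j) (e : H) :
    (σ ^ j) ((σ.symm ^ c) e) = (σ ^ (j - c)) e := by
  have h1 : (σ ^ j) = (σ ^ (j - c)) * (σ ^ c) := by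
    rw [← pow_add]; congr 1; omega
  have h2 : (σ ^ c) ((σ.symm ^ c) e) = e := by
    have h3 : (σ.symm) ^ c = (σ ^ c)⁻¹ := by rw [← inv_pow]; rfl
    rw [h3, ← Equiv.Perm.mul_apply, mul_inv_cancel, Equiv.Perm.one_apply]
  rw [h1, Equiv.Perm.mul_apply, h2]

/-- For `f ∉ V`, `n_V(f) ∉ V` and `p_V (n_V f) = f`. -/
private lemma pV_nV {f : H} (hf : ¬ inPoly ψ V f) :
    ¬ inPoly ψ V (nV σ ψ V f) ∧ pV σ ψ V (nV σ ψ V f) = f := by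
  obtain ⟨⟨hd1, hdnot⟩, hmin⟩ := nSteps_spec σ ψ V (nSteps_nonempty σ ψ V hf)
  set d := nSteps σ ψ V f with hd
  have hg : nV σ ψ V f = (σ ^ d) f := rfl
  refine ⟨by rwa [hg], ?_⟩
  have hmem : d ∈ {i : ℕ | 1 ≤ i ∧ ¬ inPoly ψ V ((σ.symm ^ i) (nV σ ψ V f))} := by
    refine ⟨hd1, ?_⟩
    rw [hg, pow_symm_apply σ le_rfl, Nat.sub_self, pow_zero]
    simpa using hf
  have hkmem : pSteps σ ψ V (nV σ ψ V f) ∈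
      {i : ℕ | 1 ≤ i ∧ ¬ inPoly ψ V ((σ.symm ^ i) (nV σ ψ V f))} :=
    Nat.sInf_mem ⟨d, hmem⟩
  set k := pSteps σ ψ V (nV σ ψ V f) with hk
  obtain ⟨hk1, hknot⟩ := hkmem
  have hsteps : k = d := by
    refine le_antisymm (Nat.sInf_le hmem) ?_
    by_contra hlt
    push_neg at hlt
    apply hknot
    rw [hg, pow_symm_apply σ (le_of_lt hlt)]
    exact hmin (d - k) (by omega) (by omega)
  rw [pV, ← hk, hsteps, hg, pow_symm_apply σ le_rfl, Nat.sub_self, pow_zero]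
  rfl

private lemma pSteps_nonempty_H3 {e : H} (he : e ∈ H3 σ ψ V) :
    {i : ℕ | 1 ≤ i ∧ ¬ inPoly ψ V ((σ.symm ^ i) e)}.Nonempty := by
  obtain ⟨heV, hcyc, -⟩ := he
  push_neg at hcyc
  obtain ⟨h, hsc, hh⟩ := hcyc
  obtain ⟨n, hn0, -, hn⟩ := hsc.symm.exists_pow_eq''
  refine ⟨n, hn0, ?_⟩
  have : (σ.symm ^ n) e = h := by
    have h3 : (σ.symm) ^ n = (σ ^ n)⁻¹ := by rw [← inv_pow]; rfl
    rw [h3, ← hn, ← Equiv.Perm.mul_apply, inv_mul_cancel, Equiv.Perm.one_apply]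
  rwa [this]

/-- Facts about `p_V(e)` for `e ∈ H₃(V)`. -/
private lemma H3_facts {e : H} (he : e ∈ H3 σ ψ V) :
    ¬ inPoly ψ V (pV σ ψ V e) ∧ inPoly ψ V (σ (pV σ ψ V e)) ∧
      nV σ ψ V (pV σ ψ V e) = σ e := by
  obtain ⟨⟨hc1, hcnot⟩, hmin⟩ := pSteps_spec σ ψ V (pSteps_nonempty_H3 σ ψ V he)
  set c := pSteps σ ψ V e with hc
  have hp : pV σ ψ V e = (σ.symm ^ c) e := rfl
  have hin : ∀ j, j ≤ c - 1 → inPoly ψ V ((σ.symm ^ j) e) := by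
    intro j hj
    rcases Nat.eq_zero_or_pos j with rfl | hj0
    · simpa using he.1
    · exact hmin j hj0 (by omega)
  have hσp : inPoly ψ V (σ (pV σ ψ V e)) := by
    have : σ (pV σ ψ V e) = (σ ^ 1) ((σ.symm ^ c) e) := by rw [hp, pow_one]
    rw [this, pow_apply_symm σ hc1]
    exact hin (c - 1) le_rfl
  refine ⟨by rwa [hp], hσp, ?_⟩
  have hmem : (c + 1) ∈ {j : ℕ | 1 ≤ j ∧ ¬ inPoly ψ V ((σ ^ j) (pV σ ψ V e))} := by
    refine ⟨by omega, ?_⟩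
    rw [hp, pow_apply_symm' σ (by omega)]
    have : c + 1 - c = 1 := by omega
    rw [this, pow_one]
    exact he.2.2
  have hkmem : nSteps σ ψ V (pV σ ψ V e) ∈
      {j : ℕ | 1 ≤ j ∧ ¬ inPoly ψ V ((σ ^ j) (pV σ ψ V e))} :=
    Nat.sInf_mem ⟨c + 1, hmem⟩
  set k := nSteps σ ψ V (pV σ ψ V e) with hk
  obtain ⟨hk1, hknot⟩ := hkmem
  have hsteps : k = c + 1 := by
    refine le_antisymm (Nat.sInf_le hmem) ?_
    by_contra hlt
    push_neg at hlt
    apply hknot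
    rw [hp, pow_apply_symm σ (by omega)]
    exact hin _ (by omega)
  rw [nV, ← hk, hsteps, hp, pow_apply_symm' σ (by omega)]
  have h11 : c + 1 - c = 1 := by omega
  rw [h11, pow_one]

private lemma H3_edge (hE : condE σ ψ V) {e : H} (he : e ∈ H3 σ ψ V) :
    isEdge ψ (pV σ ψ V e) := by
  obtain ⟨hp, hσp, -⟩ := H3_facts σ ψ V he
  rcases hE (σ (pV σ ψ V e)) hσp with h | h
  · rwa [Equiv.symm_apply_apply] at h
  · rw [Equiv.symm_apply_apply] at h
    exact absurd h hp

private lemma H3_bar_notin (hE : condE σ ψ V) {e : H} (he : e ∈ H3 σ ψ V) :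
    ¬ inPoly ψ V (bar ψ (pV σ ψ V e)) := by
  obtain ⟨hr, -, -⟩ := bar_spec ψ (H3_edge σ ψ V hE he)
  rw [← inPoly_congr ψ V hr]
  exact (H3_facts σ ψ V he).1

private lemma xF_spec {f : H} (hf : f ∈ H4 σ ψ V) :
    inPoly ψ V (xF σ ψ V f) ∧ ¬ inPoly ψ V (σ.symm (xF σ ψ V f)) ∧
      nV σ ψ V f = bar ψ (σ.symm (xF σ ψ V f)) := by
  have hx : ∃ e, inPoly ψ V e ∧ ¬ inPoly ψ V (σ.symm e) ∧
      nV σ ψ V f = bar ψ (σ.symm e) := hf.2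
  rw [xF, dif_pos hx]
  exact hx.choose_spec

private lemma mem12_sigma {a : H} (ha : a ∈ H1 σ ψ V ∪ H2 σ ψ V) :
    inPoly ψ V a ∧ inPoly ψ V (σ a) := by
  rcases ha with ha | ha
  · exact ⟨ha.1, ha.2 (σ a) ((Equiv.Perm.sameCycle_apply_right).mpr (Equiv.Perm.SameCycle.refl σ a))⟩
  · exact ⟨ha.1, ha.2.2⟩

private lemma flipFun_cases (a : H) :
    (a ∈ H1 σ ψ V ∪ H2 σ ψ V ∧ flipFun σ ψ V a = σ a) ∨
    (a ∈ H3 σ ψ V ∧ flipFun σ ψ V a = bar ψ (pV σ ψ V a)) ∨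
    (a ∈ H4 σ ψ V ∧ flipFun σ ψ V a = xF σ ψ V a) ∨
    (a ∈ H5 σ ψ V ∧ flipFun σ ψ V a = nV σ ψ V a) := by
  unfold flipFun
  split_ifs with h1 h2 h3
  · exact Or.inl ⟨h1, rfl⟩
  · exact Or.inr (Or.inl ⟨h2, rfl⟩)
  · exact Or.inr (Or.inr (Or.inl ⟨h3, rfl⟩))
  · refine Or.inr (Or.inr (Or.inr ⟨?_, rfl⟩))
    have hnot : ¬ inPoly ψ V a := by
      intro hin
      by_cases hcyc : ∀ h, σ.SameCycle a h → inPoly ψ V h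
      · exact h1 (Or.inl ⟨hin, hcyc⟩)
      by_cases hs : inPoly ψ V (σ a)
      · exact h1 (Or.inr ⟨hin, hcyc, hs⟩)
      · exact h2 ⟨hin, hcyc, hs⟩
    refine ⟨hnot, ?_⟩
    intro e heV heσ hne
    exact h3 ⟨hnot, e, heV, heσ, hne⟩

end FlipAux

-- STATEMENT 4
theorem flipFun_bijective
    (σ : Equiv.Perm H) (ψ : Setoid H) (m : Vertex σ → ℕ)
    (hΓ : IsBrauerConfig σ ψ m) (V : BrauerPolygon ψ) (hE : condE σ ψ V) :
    Function.Bijective (flipFun σ ψ V) := by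
  rw [← Finite.injective_iff_bijective]
  intro a b hab
  rcases flipFun_cases σ ψ V a with ⟨ha, hfa⟩ | ⟨ha, hfa⟩ | ⟨ha, hfa⟩ | ⟨ha, hfa⟩ <;>
    rcases flipFun_cases σ ψ V b with ⟨hb, hfb⟩ | ⟨hb, hfb⟩ | ⟨hb, hfb⟩ | ⟨hb, hfb⟩ <;>
    rw [hfa, hfb] at hab
  -- (12,12)
  · exact σ.injective hab
  -- (12,H3)
  · exact absurd (hab ▸ (mem12_sigma σ ψ V ha).2) (H3_bar_notin σ ψ V hE hb)
  -- (12,H4)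
  · have h1 := (xF_spec σ ψ V hb).2.1
    rw [← hab, Equiv.symm_apply_apply] at h1
    exact absurd (mem12_sigma σ ψ V ha).1 h1
  -- (12,H5)
  · exact absurd (hab ▸ (mem12_sigma σ ψ V ha).2) (pV_nV σ ψ V hb.1).1
  -- (H3,12)
  · exact absurd (hab ▸ (mem12_sigma σ ψ V hb).2) (H3_bar_notin σ ψ V hE ha)
  -- (H3,H3)
  · have ea := H3_edge σ ψ V hE ha
    have eb := H3_edge σ ψ V hE hb
    have hp : pV σ ψ V a = pV σ ψ V b := by
      rw [← bar_bar ψ ea, hab, bar_bar ψ eb]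
    have h2 := (H3_facts σ ψ V ha).2.2
    rw [hp, (H3_facts σ ψ V hb).2.2] at h2
    exact (σ.injective h2).symm
  -- (H3,H4)
  · exact absurd (hab ▸ (xF_spec σ ψ V hb).1) (H3_bar_notin σ ψ V hE ha)
  -- (H3,H5)
  · obtain ⟨hp, hσp, -⟩ := H3_facts σ ψ V ha
    exact absurd (by rw [Equiv.symm_apply_apply, ← hab])
      (hb.2 (σ (pV σ ψ V a)) hσp (by rwa [Equiv.symm_apply_apply]))
  -- (H4,12)
  · have h1 := (xF_spec σ ψ V ha).2.1
    rw [hab, Equiv.symm_apply_apply] at h1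
    exact absurd (mem12_sigma σ ψ V hb).1 h1
  -- (H4,H3)
  · exact absurd (hab ▸ (xF_spec σ ψ V ha).1) (H3_bar_notin σ ψ V hE hb)
  -- (H4,H4)
  · obtain ⟨-, -, hna⟩ := xF_spec σ ψ V ha
    obtain ⟨-, -, hnb⟩ := xF_spec σ ψ V hb
    have hn : nV σ ψ V a = nV σ ψ V b := by rw [hna, hnb, hab]
    have h2 := (pV_nV σ ψ V ha.1).2
    rw [hn, (pV_nV σ ψ V hb.1).2] at h2
    exact h2.symm
  -- (H4,H5)
  · exact absurd (hab ▸ (xF_spec σ ψ V ha).1) (pV_nV σ ψ V hb.1).1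
  -- (H5,12)
  · exact absurd (hab ▸ (mem12_sigma σ ψ V hb).2) (pV_nV σ ψ V ha.1).1
  -- (H5,H3)
  · obtain ⟨hp, hσp, -⟩ := H3_facts σ ψ V hb
    exact absurd (by rw [Equiv.symm_apply_apply, hab])
      (ha.2 (σ (pV σ ψ V b)) hσp (by rwa [Equiv.symm_apply_apply]))
  -- (H5,H4)
  · exact absurd (hab ▸ (xF_spec σ ψ V hb).1) (pV_nV σ ψ V ha.1).1
  -- (H5,H5)
  · have h2 := (pV_nV σ ψ V ha.1).2
    rw [hab, (pV_nV σ ψ V hb.1).2] at h2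
    exact h2.symm
end
end

section
/- Let Γ be a Brauer configuration and V a polygon satisfying condition (E). For each f ∈ H₄(V), there exists a unique e ∈ V such that σ^{-1}(e) ∉ V and n_V(f) = \overline{σ^{-1}(e)}. -/
open Finset

noncomputable section
open scoped Classical

variable {H : Type*} [Fintype H]

lemma bar_spec_of_isEdge (ψ : Setoid H) (h : H) (hE : isEdge ψ h) :
    bar ψ h ≠ h ∧ ψ.r h (bar ψ h) ∧ ∀ y, y ≠ h → ψ.r h y → y = bar ψ h := by
  have hex : ∃ x, x ≠ h ∧ ψ.r h x ∧ ∀ y, y ≠ h → ψ.r h y → y = x := by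
    obtain ⟨a, b, hab, hs⟩ := Finset.card_eq_two.mp hE
    have hh : h ∈ univ.filter fun x => ψ.r h x := by
      simp only [Finset.mem_filter, Finset.mem_univ, true_and]; exact ψ.refl h
    rw [hs] at hh
    simp only [Finset.mem_insert, Finset.mem_singleton] at hh
    rcases hh with rfl | rfl
    · refine ⟨b, hab.symm, ?_, ?_⟩
      · have : b ∈ univ.filter fun x => ψ.r h x := by rw [hs]; simp
        simpa using this
      · intro y hy hr
        have : y ∈ univ.filter fun x => ψ.r h x := by simp [hr]
        rw [hs] at this
        simp only [Finset.mem_insert, Finset.mem_singleton] at this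
        rcases this with rfl | rfl
        · exact absurd rfl hy
        · rfl
    · refine ⟨a, hab, ?_, ?_⟩
      · have : a ∈ univ.filter fun x => ψ.r h x := by rw [hs]; simp
        simpa using this
      · intro y hy hr
        have : y ∈ univ.filter fun x => ψ.r h x := by simp [hr]
        rw [hs] at this
        simp only [Finset.mem_insert, Finset.mem_singleton] at this
        rcases this with rfl | rfl
        · rfl
        · exact absurd rfl hy
  rw [bar, dif_pos hex]
  exact hex.choose_spec

-- STATEMENT 5
theorem xF_exists_unique
    (σ : Equiv.Perm H) (ψ : Setoid H) (m : Vertex σ → ℕ)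
    (hΓ : IsBrauerConfig σ ψ m) (V : BrauerPolygon ψ) (hE : condE σ ψ V)
    (f : H) (hf : f ∈ H4 σ ψ V) :
    ∃! e : H, inPoly ψ V e ∧ ¬ inPoly ψ V (σ.symm e) ∧
      nV σ ψ V f = bar ψ (σ.symm e) := by
  obtain ⟨hfV, e, he1, he2, he3⟩ := hf
  refine ⟨e, ⟨he1, he2, he3⟩, ?_⟩
  rintro e' ⟨he1', he2', he3'⟩
  -- both σ.symm e and σ.symm e' are edges by condition (E)
  have edge : ∀ x : H, inPoly ψ V x → ¬ inPoly ψ V (σ.symm x) → isEdge ψ (σ.symm x) := by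
    intro x h1 h2
    rcases hE x h1 with h | h
    · exact h
    · exact absurd h h2
  obtain ⟨hb1, hb2, hb3⟩ := bar_spec_of_isEdge ψ _ (edge e he1 he2)
  obtain ⟨hb1', hb2', hb3'⟩ := bar_spec_of_isEdge ψ _ (edge e' he1' he2')
  set h := σ.symm e with hh
  set h' := σ.symm e' with hh'
  have hbar : bar ψ h = bar ψ h' := by rw [← he3, ← he3']
  -- h' is related to bar ψ h and distinct from it
  have hrel : ψ.r (bar ψ h) h' := by
    rw [hbar]; exact ψ.symm hb2'
  have hne : h' ≠ bar ψ h := by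
    rw [hbar]; exact fun hx => hb1' hx.symm
  -- since the class of h is {h, bar ψ h}, h' = h
  have hheq : h' = h := by
    by_contra hcon
    have : h' ∈ univ.filter fun x => ψ.r h x := by
      simp only [Finset.mem_filter, Finset.mem_univ, true_and]; exact ψ.trans hb2 hrel
    have h2card := edge e he1 he2
    rw [isEdge] at h2card
    obtain ⟨a, b, hab, hs⟩ := Finset.card_eq_two.mp h2card
    have mh : h ∈ ({a, b} : Finset H) := by
      rw [← hs]; simp only [Finset.mem_filter, Finset.mem_univ, true_and]; exact ψ.refl h
    have mb : bar ψ h ∈ ({a, b} : Finset H) := by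
      rw [← hs]; simp only [Finset.mem_filter, Finset.mem_univ, true_and]; exact hb2
    have mh' : h' ∈ ({a, b} : Finset H) := by rw [← hs] at *; exact this
    simp only [Finset.mem_insert, Finset.mem_singleton] at mh mb mh'
    rcases mh with rfl | rfl <;> rcases mb with hb | hb <;>
      rcases mh' with hh2 | hh2 <;> first
        | exact hcon hh2
        | exact hne (hh2.trans hb.symm)
        | exact hb1 hb
  have : σ h' = σ h := by rw [hheq]
  rwa [hh, hh', σ.apply_symm_apply, σ.apply_symm_apply] at this
end
end

section
/- Let Γ be a Brauer configuration, U a polygon, and W ≠ U another polygon. Then the set C(W,U) := {C_h^r C_{h,f} : h ∈ W, 0 ≤ r ≤ 𝔪(s(h)) − 1, f ∈ U, f = σ^t(h), 1 ≤ t ≤ val(s(h))} of paths in Q_Γ has cardinality Σ_{v ∈ H/⟨σ⟩} 𝔪(v) · occ(v,U) · occ(v,W). -/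
open Finset

noncomputable section
open scoped Classical

variable {H : Type*} [Fintype H]

-- STATEMENT 9 aux: the index set of the paths in `C(W,U)`
def CWU (σ : Equiv.Perm H) (ψ : Setoid H) (m : Vertex σ → ℕ) (W U : BrauerPolygon ψ) :
    Set (H × ℕ × ℕ) :=
  {p | pgn ψ p.1 = W ∧ p.2.1 < m (vtx σ p.1) ∧
    1 ≤ p.2.2 ∧ p.2.2 ≤ valency σ (vtx σ p.1) ∧ pgn ψ ((σ ^ p.2.2) p.1) = U}

set_option linter.unusedSectionVars false

lemma mem_periodicPts' (σ : Equiv.Perm H) (h : H) : h ∈ Function.periodicPts ⇑σ :=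
  ⟨orderOf σ, orderOf_pos σ, by
    simp [Function.IsPeriodicPt, Function.IsFixedPt, Equiv.Perm.iterate_eq_pow,
      pow_orderOf_eq_one]⟩

lemma vtx_eq_iff (σ : Equiv.Perm H) (x h : H) :
    vtx σ x = vtx σ h ↔ σ.SameCycle x h := by
  constructor
  · intro hx; exact Quotient.exact hx
  · intro hx; exact Quotient.sound hx

lemma orbit_eq_image (σ : Equiv.Perm H) (h : H) :
    (univ.filter fun x => vtx σ x = vtx σ h) =
      (range (Function.minimalPeriod ⇑σ h)).image (fun t => σ^[t] h) := by
  have hp := mem_periodicPts' σ h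
  have hn0 : 0 < Function.minimalPeriod ⇑σ h :=
    Function.minimalPeriod_pos_of_mem_periodicPts hp
  ext x
  simp only [mem_filter, mem_univ, true_and, mem_image, mem_range, vtx_eq_iff]
  constructor
  · intro hx
    obtain ⟨i, _, hi⟩ := Equiv.Perm.SameCycle.exists_pow_eq' hx.symm
    refine ⟨i % Function.minimalPeriod ⇑σ h, Nat.mod_lt _ hn0, ?_⟩
    rw [Function.iterate_mod_minimalPeriod_eq, Equiv.Perm.iterate_eq_pow]
    exact hi
  · rintro ⟨t, _, rfl⟩
    exact (Equiv.Perm.SameCycle.symm ⟨(t : ℤ), by rw [zpow_natCast]; rfl⟩)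

lemma valency_eq_minimalPeriod (σ : Equiv.Perm H) (h : H) :
    valency σ (vtx σ h) = Function.minimalPeriod ⇑σ h := by
  rw [valency, orbit_eq_image, Finset.card_image_of_injOn, Finset.card_range]
  intro a ha b hb hab
  exact Function.iterate_injOn_Iio_minimalPeriod (by simpa using ha) (by simpa using hb) hab

lemma count_orbit (σ : Equiv.Perm H) (h : H) (Q : H → Prop) :
    ((Icc 1 (valency σ (vtx σ h))).filter fun t => Q ((σ ^ t) h)).card =
      (univ.filter fun x => vtx σ x = vtx σ h ∧ Q x).card := by
  have hp := mem_periodicPts' σ h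
  have hn0 : 0 < Function.minimalPeriod ⇑σ h :=
    Function.minimalPeriod_pos_of_mem_periodicPts hp
  rw [valency_eq_minimalPeriod]
  set n0 := Function.minimalPeriod ⇑σ h with hn0def
  apply Finset.card_bij (fun t _ => (σ ^ t) h)
  · intro t ht
    simp only [mem_filter, mem_Icc] at ht
    simp only [mem_filter, mem_univ, true_and]
    refine ⟨?_, ht.2⟩
    rw [vtx_eq_iff]
    exact (Equiv.Perm.SameCycle.symm ⟨(t : ℤ), by rw [zpow_natCast]⟩)
  · intro a ha b hb hab
    simp only [mem_filter, mem_Icc] at ha hb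
    obtain ⟨⟨ha1, ha2⟩, _⟩ := ha
    obtain ⟨⟨hb1, hb2⟩, _⟩ := hb
    have h1 : σ^[a - 1] h = σ^[b - 1] h := by
      apply σ.injective
      have key : ∀ c : ℕ, 1 ≤ c → σ (σ^[c - 1] h) = (σ ^ c) h := by
        intro c hc
        have := Function.iterate_succ_apply' ⇑σ (c - 1) h
        rw [Nat.succ_eq_add_one, Nat.sub_add_cancel hc] at this
        rw [← this, Equiv.Perm.iterate_eq_pow]
      rw [key a ha1, key b hb1, hab]
    have := Function.iterate_injOn_Iio_minimalPeriod (f := ⇑σ) (x := h)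
      (Set.mem_Iio.2 (by omega)) (Set.mem_Iio.2 (by omega)) h1
    omega
  · intro x hx
    simp only [mem_filter, mem_univ, true_and, vtx_eq_iff] at hx
    obtain ⟨hsc, hQ⟩ := hx
    obtain ⟨i, _, hieq⟩ := Equiv.Perm.SameCycle.exists_pow_eq' hsc.symm
    set j := i % n0 with hj
    have hj' : j < n0 := Nat.mod_lt _ hn0
    have hjeq : (σ ^ j) h = x := by
      rw [← Equiv.Perm.iterate_eq_pow, hj, Function.iterate_mod_minimalPeriod_eq,
        Equiv.Perm.iterate_eq_pow]
      exact hieq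
    by_cases h0 : j = 0
    · refine ⟨n0, ?_, ?_⟩
      · simp only [mem_filter, mem_Icc]
        have hfix : (σ ^ n0) h = h := by
          rw [← Equiv.Perm.iterate_eq_pow]
          exact Function.isPeriodicPt_minimalPeriod ⇑σ h
        have hxh : x = h := by rw [← hjeq, h0, pow_zero]; rfl
        exact ⟨⟨hn0, le_refl _⟩, by rw [hfix, ← hxh]; exact hQ⟩
      · rw [← Equiv.Perm.iterate_eq_pow,
          show (σ^[n0] h = h) from Function.isPeriodicPt_minimalPeriod ⇑σ h,
          ← hjeq, h0, pow_zero]; rfl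
    · refine ⟨j, ?_, hjeq⟩
      simp only [mem_filter, mem_Icc]
      exact ⟨⟨Nat.one_le_iff_ne_zero.2 h0, hj'.le⟩, by rw [hjeq]; exact hQ⟩

theorem card_CWU
    (σ : Equiv.Perm H) (ψ : Setoid H) (m : Vertex σ → ℕ)
    (hΓ : IsBrauerConfig σ ψ m) (U W : BrauerPolygon ψ) (hUW : W ≠ U) :
    Nat.card (CWU σ ψ m W U) =
      ∑ v : Vertex σ, m v * occ σ ψ v U * occ σ ψ v W := by
  classical
  set M := (Finset.univ : Finset (Vertex σ)).sup m with hM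
  set N := (Finset.univ : Finset (Vertex σ)).sup (valency σ) with hN
  have hmM : ∀ v, m v ≤ M := fun v => Finset.le_sup (mem_univ v)
  have hvN : ∀ v, valency σ v ≤ N := fun v => Finset.le_sup (mem_univ v)
  set P : H × ℕ × ℕ → Prop := fun p => pgn ψ p.1 = W ∧ p.2.1 < m (vtx σ p.1) ∧
    1 ≤ p.2.2 ∧ p.2.2 ≤ valency σ (vtx σ p.1) ∧ pgn ψ ((σ ^ p.2.2) p.1) = U with hP
  set T : Finset (H × ℕ × ℕ) := ((univ : Finset H) ×ˢ (range M ×ˢ Icc 1 N)).filter P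
    with hT
  have hset : CWU σ ψ m W U = ↑T := by
    ext p
    simp only [CWU, Set.mem_setOf_eq, hT, Finset.coe_filter, Finset.mem_product,
      mem_univ, mem_range, mem_Icc, hP, Set.mem_setOf_eq, true_and]
    constructor
    · rintro ⟨h1, h2, h3, h4, h5⟩
      exact ⟨⟨h2.trans_le (hmM _), h3, h4.trans (hvN _)⟩, h1, h2, h3, h4, h5⟩
    · rintro ⟨_, h⟩; exact h
  rw [hset, Nat.card_coe_set_eq, Set.ncard_coe_finset]
  rw [Finset.card_eq_sum_card_fiberwise (f := Prod.fst) (t := (univ : Finset H))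
    (fun _ _ => mem_univ _)]
  have hco : ∀ h : H,
      ((Icc 1 (valency σ (vtx σ h))).filter fun t => pgn ψ ((σ ^ t) h) = U).card =
        occ σ ψ (vtx σ h) U :=
    fun h => by
      have hc := count_orbit σ h (fun x => pgn ψ x = U)
      convert hc using 2 <;> (try simp only [occ]) <;> congr!
  have hfiber : ∀ h : H, (T.filter fun p => p.1 = h).card =
      if pgn ψ h = W then m (vtx σ h) * occ σ ψ (vtx σ h) U else 0 := by
    intro h
    by_cases hW : pgn ψ h = W
    · rw [if_pos hW]
      have himg : T.filter (fun p => p.1 = h) =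
          (range (m (vtx σ h)) ×ˢ ((Icc 1 (valency σ (vtx σ h))).filter
            (fun t => pgn ψ ((σ ^ t) h) = U))).image (fun q => (h, q.1, q.2)) := by
        ext ⟨a, r, t⟩
        constructor
        · intro hp
          obtain ⟨hpT, hph⟩ := Finset.mem_filter.mp hp
          obtain ⟨-, p1, p2, p3, p4, p5⟩ := Finset.mem_filter.mp hpT
          simp only at hph
          subst hph
          refine Finset.mem_image.mpr ⟨(r, t), ?_, rfl⟩
          exact Finset.mem_product.mpr ⟨Finset.mem_range.mpr p2,
            Finset.mem_filter.mpr ⟨Finset.mem_Icc.mpr ⟨p3, p4⟩, p5⟩⟩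
        · intro hp
          obtain ⟨⟨r', t'⟩, hq, heq⟩ := Finset.mem_image.mp hp
          obtain ⟨hr', hq2⟩ := Finset.mem_product.mp hq
          obtain ⟨ht', hU'⟩ := Finset.mem_filter.mp hq2
          simp only [Prod.mk.injEq] at heq
          obtain ⟨rfl, rfl, rfl⟩ := heq
          rw [Finset.mem_range] at hr'
          rw [Finset.mem_Icc] at ht'
          refine Finset.mem_filter.mpr ⟨Finset.mem_filter.mpr ⟨?_, ?_⟩, rfl⟩
          · exact Finset.mem_product.mpr ⟨mem_univ _,
              Finset.mem_product.mpr ⟨Finset.mem_range.mpr (hr'.trans_le (hmM _)),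
                Finset.mem_Icc.mpr ⟨ht'.1, ht'.2.trans (hvN _)⟩⟩⟩
          · exact ⟨hW, hr', ht'.1, ht'.2, hU'⟩
      rw [himg, Finset.card_image_of_injective _
        (fun a b hab => by simpa [Prod.ext_iff] using hab),
        Finset.card_product, Finset.card_range, hco]
    · rw [if_neg hW, Finset.card_eq_zero, Finset.filter_eq_empty_iff]
      intro p hp
      have h1 : P p := (Finset.mem_filter.mp hp).2
      intro hph
      exact hW (hph ▸ h1.1)
  simp_rw [hfiber]
  rw [← Finset.sum_fiberwise_of_maps_to (g := vtx σ) (t := (univ : Finset (Vertex σ)))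
    (fun _ _ => mem_univ _)]
  refine Finset.sum_congr rfl fun v _ => ?_
  have hstep : ∑ h ∈ univ.filter (fun h => vtx σ h = v),
      (if pgn ψ h = W then m (vtx σ h) * occ σ ψ (vtx σ h) U else 0) =
      ∑ h ∈ univ.filter (fun h => vtx σ h = v),
      (if pgn ψ h = W then m v * occ σ ψ v U else 0) := by
    refine Finset.sum_congr rfl fun h hh => ?_
    simp only [mem_filter, mem_univ, true_and] at hh
    rw [hh]
  rw [hstep, ← Finset.sum_filter, Finset.sum_const, Finset.filter_filter, smul_eq_mul]
  have hcard : (univ.filter fun h => vtx σ h = v ∧ pgn ψ h = W).card = occ σ ψ v W := rfl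
  rw [hcard]
  ring
end
end
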